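/- arXiv:1308.2457 — 4 statements merged into one kernel-verified Lean document; each statement's English description precedes it below -/
import Mathlib

section
/- (Mean value theorem for tangent cones) Let γ:[a,b]→ℝ² be a simple arc-length parameterized curve whose derivative is piecewise continuous on (a,b) except possibly at finitely many points, and whose image has no cusps. Then there exists c ∈ (a,b) such that either γ(b)−γ(a) or −(γ(b)−γ(a)) lies in the tangent cone T_γ(c). -/
open Metric Set Filter RealInnerProductSpace

noncomputable section

/-- The tangent cone of a piecewise `C¹` curve at a parameter `s`:
all nontrivial nonnegative combinations of the one-sided limits of the derivative. -/
def TanCone (γ : ℝ → EuclideanSpace ℝ (Fin 2)) (s : ℝ) : Set (EuclideanSpace ℝ (Fin 2)) :=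
  {w | ∃ Γm Γp : EuclideanSpace ℝ (Fin 2),
      Tendsto (deriv γ) (nhdsWithin s (Set.Iio s)) (nhds Γm) ∧
      Tendsto (deriv γ) (nhdsWithin s (Set.Ioi s)) (nhds Γp) ∧
      ∃ a b : ℝ, 0 ≤ a ∧ 0 ≤ b ∧ 0 < a + b ∧ w = a • Γm + b • Γp}

/-- Tangent-cone graph-like at the point `γ s` with radius `r`. -/
def TCGLAt (Ω : Set (EuclideanSpace ℝ (Fin 2))) (γ : ℝ → EuclideanSpace ℝ (Fin 2))
    (r s : ℝ) : Prop :=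
  ∀ w ∈ TanCone γ s, ∀ u ∈ frontier Ω ∩ closedBall (γ s) r,
    ∀ v ∈ frontier Ω ∩ closedBall (γ s) r, u ≠ v → ⟪w, u - v⟫ ≠ 0

open Topology

namespace Statement5Aux

local notation "E2" => EuclideanSpace ℝ (Fin 2)

lemma inner_eq (x y : E2) : ⟪x, y⟫ = x 0 * y 0 + x 1 * y 1 := by
  simp [PiLp.inner_apply, Fin.sum_univ_two, RCLike.inner_apply, conj_trivial]
  ring

/-- rotation by 90 degrees -/
def rot (d : E2) : E2 := (WithLp.equiv 2 (Fin 2 → ℝ)).symm ![-(d 1), d 0]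

@[simp] lemma rot_apply_zero (d : E2) : rot d 0 = -(d 1) := rfl
@[simp] lemma rot_apply_one (d : E2) : rot d 1 = d 0 := rfl

lemma inner_rot_self (d : E2) : ⟪rot d, d⟫ = 0 := by
  rw [inner_eq]; simp; ring

lemma span_of_inner_rot (d : E2) (hd : d ≠ 0) (w : E2) (hw : ⟪rot d, w⟫ = 0) :
    ∃ t : ℝ, w = t • d := by
  rw [inner_eq] at hw
  simp only [rot_apply_zero, rot_apply_one] at hw
  have hcases : d 0 ≠ 0 ∨ d 1 ≠ 0 := by
    by_contra h
    push_neg at h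
    apply hd
    ext i
    fin_cases i
    · simpa using h.1
    · simpa using h.2
  rcases hcases with h0 | h1
  · refine ⟨w 0 / d 0, ?_⟩
    ext i
    fin_cases i
    · show w 0 = (w 0 / d 0) * d 0
      field_simp
    · show w 1 = (w 0 / d 0) * d 1
      field_simp
      nlinarith [hw]
  · refine ⟨w 1 / d 1, ?_⟩
    ext i
    fin_cases i
    · show w 0 = (w 1 / d 1) * d 0
      field_simp
      nlinarith [hw]
    · show w 1 = (w 1 / d 1) * d 1
      field_simp

/-- Algebraic step: from opposite signs of the normal components, no cusp, and unit
norms, get `d` or `-d` in the cone generated by `Γm, Γp`. -/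
lemma cone_of_signs (d m Γm Γp : E2) (hd : d ≠ 0)
    (hspan : ∀ w : E2, ⟪m, w⟫ = 0 → ∃ t : ℝ, w = t • d)
    (hnm : ‖Γm‖ = 1) (hnp : ‖Γp‖ = 1) (hcusp : Γp ≠ -Γm)
    (h1 : 0 ≤ ⟪m, Γm⟫) (h2 : ⟪m, Γp⟫ ≤ 0) :
    (∃ A B : ℝ, 0 ≤ A ∧ 0 ≤ B ∧ 0 < A + B ∧ d = A • Γm + B • Γp) ∨
    (∃ A B : ℝ, 0 ≤ A ∧ 0 ≤ B ∧ 0 < A + B ∧ -d = A • Γm + B • Γp) := by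
  set βm := ⟪m, Γm⟫ with hβm
  set βp := ⟪m, Γp⟫ with hβp
  -- choose coefficients A B with A βm + B βp = 0, A,B ≥ 0, A+B > 0
  obtain ⟨A, B, hA, hB, hAB, horth⟩ :
      ∃ A B : ℝ, 0 ≤ A ∧ 0 ≤ B ∧ 0 < A + B ∧ ⟪m, A • Γm + B • Γp⟫ = 0 := by
    by_cases h0 : βm = 0 ∧ βp = 0
    · refine ⟨1, 0, zero_le_one, le_refl 0, by norm_num, ?_⟩
      rw [inner_add_right, inner_smul_right, inner_smul_right, ← hβm, ← hβp, h0.1, h0.2]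
      ring
    · refine ⟨-βp, βm, by linarith, h1, ?_, ?_⟩
      · rcases (not_and_or.1 h0) with h | h
        · have : 0 < βm := lt_of_le_of_ne h1 (Ne.symm h)
          linarith
        · have : βp < 0 := lt_of_le_of_ne h2 h
          linarith
      · rw [inner_add_right, inner_smul_right, inner_smul_right, ← hβm, ← hβp]
        ring
  set w := A • Γm + B • Γp with hw
  have hwne : w ≠ 0 := by
    intro hzero
    by_cases hB0 : B = 0
    · have hA0 : 0 < A := by rw [hB0] at hAB; linarith
      rw [hw, hB0, zero_smul, add_zero] at hzero
      have : Γm = 0 := by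
        have := smul_eq_zero.1 hzero
        rcases this with h | h
        · exact absurd h (ne_of_gt hA0)
        · exact h
      rw [this, norm_zero] at hnm; norm_num at hnm
    · have hB0' : 0 < B := lt_of_le_of_ne hB (Ne.symm hB0)
      have hΓp : Γp = (-(A / B)) • Γm := by
        have : B • Γp = -(A • Γm) := by
          rw [hw] at hzero
          linear_combination (norm := module) hzero
        calc Γp = B⁻¹ • (B • Γp) := by rw [smul_smul, inv_mul_cancel₀ hB0, one_smul]
        _ = B⁻¹ • (-(A • Γm)) := by rw [this]
        _ = (-(A / B)) • Γm := by rw [smul_neg, smul_smul]; rw [← neg_smul]; ring_nf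
      have hnorm : |A / B| = 1 := by
        have := congrArg norm hΓp
        rw [hnp, norm_smul, hnm, mul_one, Real.norm_eq_abs, abs_neg] at this
        exact this.symm
      have hABeq : A / B = 1 := by
        rcases abs_eq (by norm_num : (0:ℝ) ≤ 1) |>.1 hnorm with h | h
        · exact h
        · exfalso
          have : 0 ≤ A / B := div_nonneg hA hB
          rw [h] at this; linarith
      have : A = B := by field_simp at hABeq; linarith
      apply hcusp
      rw [hΓp, this]
      rw [div_self (ne_of_gt hB0')]
      module
  obtain ⟨t, ht⟩ := hspan w horth
  have htne : t ≠ 0 := by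
    intro h
    rw [h, zero_smul] at ht
    exact hwne ht
  rcases lt_or_gt_of_ne htne with hneg | hpos
  · right
    have hti : (0:ℝ) < -t⁻¹ := neg_pos.2 (inv_lt_zero.2 hneg)
    refine ⟨(-t⁻¹) * A, (-t⁻¹) * B, ?_, ?_, ?_, ?_⟩
    · exact mul_nonneg hti.le hA
    · exact mul_nonneg hti.le hB
    · calc (0:ℝ) < (-t⁻¹) * (A + B) := mul_pos hti hAB
        _ = (-t⁻¹) * A + (-t⁻¹) * B := by ring
    · have : -d = (-t⁻¹) • w := by
        rw [ht, smul_smul]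
        have : -t⁻¹ * t = -1 := by field_simp
        rw [this, neg_one_smul]
      rw [this, hw, smul_add, smul_smul, smul_smul]
  · left
    refine ⟨t⁻¹ * A, t⁻¹ * B, ?_, ?_, ?_, ?_⟩
    · exact mul_nonneg (by positivity) hA
    · exact mul_nonneg (by positivity) hB
    · calc (0:ℝ) < t⁻¹ * (A + B) := by positivity
        _ = t⁻¹ * A + t⁻¹ * B := by ring
    · have : d = t⁻¹ • w := by
        rw [ht, smul_smul, inv_mul_cancel₀ htne, one_smul]
      rw [this, hw, smul_add, smul_smul, smul_smul]

/-- Eventually, points to the left of `c` are good points. -/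
lemma eventually_left (a b c : ℝ) (F : Finset ℝ) (hc : c ∈ Ioo a b) :
    ∀ᶠ t in 𝓝[<] c, t ∈ Ioo a b ∧ t ∉ F := by
  have h1 : ∀ᶠ t in 𝓝 c, t ∈ Ioo a b := isOpen_Ioo.mem_nhds hc
  have h2 : ∀ᶠ t in 𝓝 c, t ∉ ((F : Set ℝ) \ {c}) := by
    have hcl : IsClosed ((F : Set ℝ) \ {c}) := (F.finite_toSet.subset diff_subset).isClosed
    have : ((F : Set ℝ) \ {c})ᶜ ∈ 𝓝 c := hcl.isOpen_compl.mem_nhds (by simp)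
    exact this
  have h3 : ∀ᶠ t in 𝓝[<] c, t ∈ Iio c := eventually_mem_nhdsWithin
  filter_upwards [(h1.and h2).filter_mono nhdsWithin_le_nhds, h3] with t ht htlt
  refine ⟨ht.1, fun hF => ht.2 ⟨hF, ?_⟩⟩
  exact ne_of_lt htlt

lemma eventually_right (a b c : ℝ) (F : Finset ℝ) (hc : c ∈ Ioo a b) :
    ∀ᶠ t in 𝓝[>] c, t ∈ Ioo a b ∧ t ∉ F := by
  have h1 : ∀ᶠ t in 𝓝 c, t ∈ Ioo a b := isOpen_Ioo.mem_nhds hc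
  have h2 : ∀ᶠ t in 𝓝 c, t ∉ ((F : Set ℝ) \ {c}) := by
    have hcl : IsClosed ((F : Set ℝ) \ {c}) := (F.finite_toSet.subset diff_subset).isClosed
    exact hcl.isOpen_compl.mem_nhds (by simp)
  have h3 : ∀ᶠ t in 𝓝[>] c, t ∈ Ioi c := eventually_mem_nhdsWithin
  filter_upwards [(h1.and h2).filter_mono nhdsWithin_le_nhds, h3] with t ht htgt
  refine ⟨ht.1, fun hF => ht.2 ⟨hF, ?_⟩⟩
  exact (ne_of_gt htgt)

/-- Analytic step: at an interior maximum of `t ↦ ⟪m, γ t⟫`, the left derivative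
limit has nonnegative `m`-component and the right one nonpositive. -/
lemma sided_signs (a b : ℝ) (γ : ℝ → E2) (hcont : ContinuousOn γ (Icc a b))
    (F : Finset ℝ)
    (hdiff : ∀ t ∈ Ioo a b, t ∉ F → DifferentiableAt ℝ γ t)
    (m : E2) (c : ℝ) (hc : c ∈ Ioo a b)
    (hmax : ∀ t ∈ Icc a b, ⟪m, γ t⟫ ≤ ⟪m, γ c⟫)
    (Γm Γp : E2)
    (hΓm : Tendsto (deriv γ) (𝓝[<] c) (𝓝 Γm))
    (hΓp : Tendsto (deriv γ) (𝓝[>] c) (𝓝 Γp)) :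
    0 ≤ ⟪m, Γm⟫ ∧ ⟪m, Γp⟫ ≤ 0 := by
  have hderiv : ∀ x ∈ Ioo a b, x ∉ F →
      HasDerivAt (fun t => ⟪m, γ t⟫) ⟪m, deriv γ x⟫ x := by
    intro x hx hxF
    have h := (hasDerivAt_const x m).inner ℝ ((hdiff x hx hxF).hasDerivAt)
    simpa using h
  constructor
  · by_contra hneg
    push_neg at hneg
    have htend : Tendsto (fun t => ⟪m, deriv γ t⟫) (𝓝[<] c) (𝓝 ⟪m, Γm⟫) :=
      tendsto_const_nhds.inner hΓm
    have hev2 : ∀ᶠ t in 𝓝[<] c, ⟪m, deriv γ t⟫ < 0 := htend.eventually_lt_const hneg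
    have hev := (eventually_left a b c F hc).and hev2
    rcases mem_nhdsLT_iff_exists_Ioo_subset.1 hev with ⟨u, hu, hsub⟩
    obtain ⟨v, hv⟩ : ∃ v, v ∈ Ioo u c := ⟨(u + c) / 2, by constructor <;> simp at hu ⊢ <;> linarith [hu]⟩
    have hvP := hsub hv
    have hIcc : Icc v c ⊆ Icc a b := Icc_subset_Icc (le_of_lt hvP.1.1.1) (le_of_lt hc.2)
    have hanti : StrictAntiOn (fun t => ⟪m, γ t⟫) (Icc v c) := by
      apply strictAntiOn_of_deriv_neg (convex_Icc v c)
      · exact continuousOn_const.inner (hcont.mono hIcc)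
      · intro x hx
        rw [interior_Icc] at hx
        have hxP := hsub ⟨hv.1.trans hx.1, hx.2⟩
        rw [(hderiv x hxP.1.1 hxP.1.2).deriv]
        exact hxP.2
    have h1 : ⟪m, γ c⟫ < ⟪m, γ v⟫ :=
      hanti (left_mem_Icc.2 (le_of_lt hv.2)) (right_mem_Icc.2 (le_of_lt hv.2)) hv.2
    have h2 : ⟪m, γ v⟫ ≤ ⟪m, γ c⟫ := hmax v (hIcc (left_mem_Icc.2 (le_of_lt hv.2)))
    linarith
  · by_contra hpos
    push_neg at hpos
    have htend : Tendsto (fun t => ⟪m, deriv γ t⟫) (𝓝[>] c) (𝓝 ⟪m, Γp⟫) :=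
      tendsto_const_nhds.inner hΓp
    have hev2 : ∀ᶠ t in 𝓝[>] c, 0 < ⟪m, deriv γ t⟫ := htend.eventually_const_lt hpos
    have hev := (eventually_right a b c F hc).and hev2
    rcases mem_nhdsGT_iff_exists_Ioo_subset.1 hev with ⟨u, hu, hsub⟩
    obtain ⟨v, hv⟩ : ∃ v, v ∈ Ioo c u := ⟨(c + u) / 2, by constructor <;> simp at hu ⊢ <;> linarith [hu]⟩
    have hvP := hsub hv
    have hIcc : Icc c v ⊆ Icc a b := Icc_subset_Icc (le_of_lt hc.1) (le_of_lt hvP.1.1.2)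
    have hmono : StrictMonoOn (fun t => ⟪m, γ t⟫) (Icc c v) := by
      apply strictMonoOn_of_deriv_pos (convex_Icc c v)
      · exact continuousOn_const.inner (hcont.mono hIcc)
      · intro x hx
        rw [interior_Icc] at hx
        have hxP := hsub ⟨hx.1, hx.2.trans hv.2⟩
        rw [(hderiv x hxP.1.1 hxP.1.2).deriv]
        exact hxP.2
    have h1 : ⟪m, γ c⟫ < ⟪m, γ v⟫ :=
      hmono (left_mem_Icc.2 (le_of_lt hv.1)) (right_mem_Icc.2 (le_of_lt hv.1)) hv.1
    have h2 : ⟪m, γ v⟫ ≤ ⟪m, γ c⟫ := hmax v (hIcc (right_mem_Icc.2 (le_of_lt hv.1)))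
    linarith

end Statement5Aux

open Statement5Aux in
/-- Mean value theorem for tangent cones. -/
theorem statement5
    (a b : ℝ) (hab : a < b)
    (γ : ℝ → EuclideanSpace ℝ (Fin 2))
    (hcont : ContinuousOn γ (Set.Icc a b))
    (hsimple : Set.InjOn γ (Set.Icc a b))
    -- γ' is piecewise continuous on (a,b) except at finitely many points,
    -- and γ is arc-length parameterized:
    (F : Finset ℝ)
    (hdiff : ∀ t ∈ Set.Ioo a b, t ∉ F → DifferentiableAt ℝ γ t)
    (hderivcont : ContinuousOn (deriv γ) (Set.Ioo a b \ F))
    (harc : ∀ t ∈ Set.Ioo a b, t ∉ F → ‖deriv γ t‖ = 1)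
    -- one-sided derivative limits exist everywhere in (a,b):
    (hlim : ∀ c ∈ Set.Ioo a b, ∃ Γm Γp : EuclideanSpace ℝ (Fin 2),
      Tendsto (deriv γ) (nhdsWithin c (Set.Iio c)) (nhds Γm) ∧
      Tendsto (deriv γ) (nhdsWithin c (Set.Ioi c)) (nhds Γp))
    -- the image of γ has no cusps:
    (hnocusp : ∀ c ∈ Set.Ioo a b, ∀ Γm Γp : EuclideanSpace ℝ (Fin 2),
      Tendsto (deriv γ) (nhdsWithin c (Set.Iio c)) (nhds Γm) →
      Tendsto (deriv γ) (nhdsWithin c (Set.Ioi c)) (nhds Γp) →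
      Γp ≠ -Γm) :
    ∃ c ∈ Set.Ioo a b,
      (γ b - γ a) ∈ TanCone γ c ∨ -(γ b - γ a) ∈ TanCone γ c := by
  set d : EuclideanSpace ℝ (Fin 2) := γ b - γ a with hd_def
  have ha : a ∈ Set.Icc a b := ⟨le_refl a, le_of_lt hab⟩
  have hb : b ∈ Set.Icc a b := ⟨le_of_lt hab, le_refl b⟩
  have hd : d ≠ 0 := by
    intro h
    have : γ b = γ a := by rwa [hd_def, sub_eq_zero] at h
    exact absurd (hsimple hb ha this) (ne_of_gt hab)
  set n : EuclideanSpace ℝ (Fin 2) := rot d with hn_def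
  have hnd : ⟪n, d⟫ = 0 := inner_rot_self d
  have hfab : ⟪n, γ a⟫ = ⟪n, γ b⟫ := by
    have : ⟪n, γ b⟫ - ⟪n, γ a⟫ = ⟪n, d⟫ := by rw [hd_def, inner_sub_right]
    rw [hnd] at this
    linarith
  -- find an interior max of ⟪n, γ ·⟫ or of ⟪-n, γ ·⟫
  have key : ∃ c ∈ Set.Ioo a b,
      (∀ t ∈ Set.Icc a b, ⟪n, γ t⟫ ≤ ⟪n, γ c⟫) ∨
      (∀ t ∈ Set.Icc a b, ⟪-n, γ t⟫ ≤ ⟪-n, γ c⟫) := by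
    have hfc : ContinuousOn (fun t => ⟪n, γ t⟫) (Set.Icc a b) :=
      continuousOn_const.inner hcont
    obtain ⟨c, hcmem, hcmax⟩ :=
      isCompact_Icc.exists_isMaxOn (Set.nonempty_Icc.2 (le_of_lt hab)) hfc
    obtain ⟨c', hc'mem, hc'min⟩ :=
      isCompact_Icc.exists_isMinOn (Set.nonempty_Icc.2 (le_of_lt hab)) hfc
    by_cases hcin : c ∈ Set.Ioo a b
    · exact ⟨c, hcin, Or.inl fun t ht => hcmax ht⟩
    · by_cases hc'in : c' ∈ Set.Ioo a b
      · refine ⟨c', hc'in, Or.inr fun t ht => ?_⟩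
        have h' : ⟪n, γ c'⟫ ≤ ⟪n, γ t⟫ := hc'min ht
        simp only [inner_neg_left]
        linarith
      · -- both extrema at endpoints: f is constant
        have hce : ⟪n, γ c⟫ = ⟪n, γ a⟫ := by
          rcases (Set.mem_Icc.1 hcmem).1.eq_or_lt with h | h
          · rw [← h]
          · rcases (Set.mem_Icc.1 hcmem).2.lt_or_eq with h' | h'
            · exact absurd ⟨h, h'⟩ hcin
            · rw [h', hfab]
        have hc'e : ⟪n, γ c'⟫ = ⟪n, γ a⟫ := by
          rcases (Set.mem_Icc.1 hc'mem).1.eq_or_lt with h | h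
          · rw [← h]
          · rcases (Set.mem_Icc.1 hc'mem).2.lt_or_eq with h' | h'
            · exact absurd ⟨h, h'⟩ hc'in
            · rw [h', hfab]
        have hmid : (a + b) / 2 ∈ Set.Ioo a b := ⟨by linarith, by linarith⟩
        refine ⟨(a + b) / 2, hmid, Or.inl fun t ht => ?_⟩
        have h1 : ⟪n, γ t⟫ ≤ ⟪n, γ c⟫ := hcmax ht
        have h2 : ⟪n, γ c'⟫ ≤ ⟪n, γ ((a + b) / 2)⟫ :=
          hc'min (Set.mem_Icc_of_Ioo hmid)
        linarith [h1, h2, hce, hc'e]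
  obtain ⟨c, hc, hbranch⟩ := key
  obtain ⟨Γm, Γp, hΓm, hΓp⟩ := hlim c hc
  -- unit norms of the one-sided limits
  have hnm : ‖Γm‖ = 1 := by
    have h2 : Tendsto (fun t => ‖deriv γ t‖) (𝓝[<] c) (𝓝 1) := by
      have hev : (fun t => ‖deriv γ t‖) =ᶠ[𝓝[<] c] (fun _ => 1) :=
        (eventually_left a b c F hc).mono fun t ht => harc t ht.1 ht.2
      exact Tendsto.congr' hev.symm tendsto_const_nhds
    exact tendsto_nhds_unique hΓm.norm h2
  have hnp : ‖Γp‖ = 1 := by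
    have h2 : Tendsto (fun t => ‖deriv γ t‖) (𝓝[>] c) (𝓝 1) := by
      have hev : (fun t => ‖deriv γ t‖) =ᶠ[𝓝[>] c] (fun _ => 1) :=
        (eventually_right a b c F hc).mono fun t ht => harc t ht.1 ht.2
      exact Tendsto.congr' hev.symm tendsto_const_nhds
    exact tendsto_nhds_unique hΓp.norm h2
  have hcusp : Γp ≠ -Γm := hnocusp c hc Γm Γp hΓm hΓp
  have hspan : ∀ w : EuclideanSpace ℝ (Fin 2), ⟪n, w⟫ = 0 → ∃ t : ℝ, w = t • d :=
    span_of_inner_rot d hd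
  rcases hbranch with hmax | hmax
  · have hsigns := sided_signs a b γ hcont F hdiff n c hc hmax Γm Γp hΓm hΓp
    rcases cone_of_signs d n Γm Γp hd hspan hnm hnp hcusp hsigns.1 hsigns.2 with
      ⟨A, B, hA, hB, hAB, heq⟩ | ⟨A, B, hA, hB, hAB, heq⟩
    · exact ⟨c, hc, Or.inl ⟨Γm, Γp, hΓm, hΓp, A, B, hA, hB, hAB, heq⟩⟩
    · exact ⟨c, hc, Or.inr ⟨Γm, Γp, hΓm, hΓp, A, B, hA, hB, hAB, heq⟩⟩
  · have hsigns := sided_signs a b γ hcont F hdiff (-n) c hc hmax Γm Γp hΓm hΓp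
    have hspan' : ∀ w : EuclideanSpace ℝ (Fin 2), ⟪-n, w⟫ = 0 → ∃ t : ℝ, w = t • d := by
      intro w hw
      apply hspan
      rw [inner_neg_left] at hw
      linarith
    rcases cone_of_signs d (-n) Γm Γp hd hspan' hnm hnp hcusp hsigns.1 hsigns.2 with
      ⟨A, B, hA, hB, hAB, heq⟩ | ⟨A, B, hA, hB, hAB, heq⟩
    · exact ⟨c, hc, Or.inl ⟨Γm, Γp, hΓm, hΓp, A, B, hA, hB, hAB, heq⟩⟩
    · exact ⟨c, hc, Or.inr ⟨Γm, Γp, hΓm, hΓp, A, B, hA, hB, hAB, heq⟩⟩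
end
end

section
/- Suppose ∂Ω is tangent-cone graph-like with radius r and P is a boundary arc between two points at Euclidean distance less than r such that all pairs of points of P are within distance less than r of each other. Then for any q₁, q₂ ∈ P, the arc length along P between q₁ and q₂ is at most √2 times the Euclidean distance d(q₁,q₂). -/
open Metric Set Filter RealInnerProductSpace

set_option maxHeartbeats 1000000

noncomputable section

/-- quarter-circle scalar lemma -/
lemma st8_quarter {m x y : ℝ} (hm : 0 ≤ m) (hx : m ≤ x) (hy : m ≤ y) (hy1 : y ≤ 1)
    (hrel : x^2 + y^2 + m^2 = 1 + 2*m*x*y) : m ≤ x*y := by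
  rcases le_or_gt (m*y) x with h | h
  · have hy0 : 0 ≤ y := le_trans hm hy
    have hy2 : y^2 ≤ 1 := by nlinarith
    have hu : (x - m*y)^2 = (1-m^2)*(1-y^2) := by linear_combination hrel
    set a := y*(x-m*y) with ha_def
    set b := m*(1-y^2) with hb_def
    have ha : 0 ≤ a := mul_nonneg hy0 (sub_nonneg.2 h)
    have hb : 0 ≤ b := mul_nonneg hm (by linarith)
    have h1 : (a - b) * (a + b) = (1-y^2)*(y^2-m^2) := by
      rw [ha_def, hb_def]; linear_combination y^2 * hu
    have h2 : 0 ≤ (a - b) * (a + b) := by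
      rw [h1]; exact mul_nonneg (by linarith) (by nlinarith)
    have hba : b ≤ a := by nlinarith
    have hid : x*y - m = a - b := by rw [ha_def, hb_def]; ring
    linarith
  · nlinarith [mul_nonneg hm (sub_nonneg.2 hy1)]

/-- Gram determinant of three vectors in the plane vanishes. -/
lemma st8_gram (a b c : EuclideanSpace ℝ (Fin 2)) (ha : ‖a‖ = 1) (hb : ‖b‖ = 1) (hc : ‖c‖ = 1) :
    ⟪a,c⟫^2 + ⟪b,c⟫^2 + ⟪a,b⟫^2 = 1 + 2*⟪a,b⟫*⟪a,c⟫*⟪b,c⟫ := by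
  classical
  set V : Fin 3 → EuclideanSpace ℝ (Fin 2) := ![a, b, c] with hV
  have hnli : ¬ LinearIndependent ℝ V := by
    intro hli
    have := hli.fintype_card_le_finrank
    simp [finrank_euclideanSpace_fin] at this
  obtain ⟨g, hg0, i, hgi⟩ := Fintype.not_linearIndependent_iff.1 hnli
  set M : Matrix (Fin 3) (Fin 3) ℝ := Matrix.of (fun i j => ⟪V i, V j⟫) with hM
  have hvm : Matrix.vecMul g M = 0 := by
    funext j
    have : (Matrix.vecMul g M) j = ⟪∑ i, g i • V i, V j⟫ := by
      rw [sum_inner]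
      simp [Matrix.vecMul, dotProduct, hM, real_inner_smul_left, mul_add, mul_assoc]
    rw [this, hg0, inner_zero_left]
    rfl
  have hdet : M.det = 0 :=
    Matrix.exists_vecMul_eq_zero_iff.1 ⟨g, by intro h; exact hgi (by rw [h]; rfl), hvm⟩
  have haa : ⟪a,a⟫ = 1 := by rw [real_inner_self_eq_norm_sq, ha]; norm_num
  have hbb : ⟪b,b⟫ = 1 := by rw [real_inner_self_eq_norm_sq, hb]; norm_num
  have hcc : ⟪c,c⟫ = 1 := by rw [real_inner_self_eq_norm_sq, hc]; norm_num
  have hba : ⟪b,a⟫ = ⟪a,b⟫ := real_inner_comm _ _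
  have hca : ⟪c,a⟫ = ⟪a,c⟫ := real_inner_comm _ _
  have hcb : ⟪c,b⟫ = ⟪b,c⟫ := real_inner_comm _ _
  rw [Matrix.det_fin_three] at hdet
  simp only [hM, Matrix.of_apply, hV] at hdet
  simp only [Matrix.cons_val_zero, Matrix.cons_val_one, Matrix.head_cons, Matrix.cons_val_two,
    Matrix.tail_cons] at hdet
  rw [haa, hbb, hcc, hba, hca, hcb] at hdet
  ring_nf at hdet ⊢
  linarith

lemma st8_base (f : ℝ → ℝ) (c A B : ℝ)
    (hf : ContinuousOn f (Set.Icc A B))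
    (hd : ∀ x ∈ Set.Ioo A B, DifferentiableAt ℝ f x)
    (hc : ∀ x ∈ Set.Ioo A B, c ≤ deriv f x)
    (hAB : A ≤ B) : c * (B - A) ≤ f B - f A := by
  set g : ℝ → ℝ := fun x => f x - c * x with hg
  have hgc : ContinuousOn g (Set.Icc A B) :=
    hf.sub (continuousOn_const.mul continuousOn_id)
  have hmono : MonotoneOn g (Set.Icc A B) := by
    apply monotoneOn_of_deriv_nonneg (convex_Icc A B) hgc
    · intro x hx
      rw [interior_Icc] at hx
      exact ((hd x hx).sub ((differentiable_id.const_mul c) x)).differentiableWithinAt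
    · intro x hx
      rw [interior_Icc] at hx
      have hder : HasDerivAt g (deriv f x - c) x := by
        have h := (hd x hx).hasDerivAt.sub ((hasDerivAt_id x).const_mul c)
        simp only [mul_one] at h
        exact h
      rw [hder.deriv]
      linarith [hc x hx]
  have := hmono (left_mem_Icc.2 hAB) (right_mem_Icc.2 hAB) hAB
  simp only [hg] at this
  linarith

lemma st8_mono : ∀ (n : ℕ) (F : Finset ℝ) (f : ℝ → ℝ) (c A B : ℝ),
    F.card ≤ n →
    ContinuousOn f (Set.Icc A B) →
    (∀ x ∈ Set.Ioo A B, x ∉ F → DifferentiableAt ℝ f x) →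
    (∀ x ∈ Set.Ioo A B, x ∉ F → c ≤ deriv f x) →
    A ≤ B → c * (B - A) ≤ f B - f A := by
  intro n
  induction n with
  | zero =>
    intro F f c A B hcard hf hd hc hAB
    have hF : ∀ x ∈ Set.Ioo A B, x ∉ F := by
      intro x _ hx
      have := Finset.card_pos.2 ⟨x, hx⟩
      omega
    exact st8_base f c A B hf (fun x hx => hd x hx (hF x hx)) (fun x hx => hc x hx (hF x hx)) hAB
  | succ n ih =>
    intro F f c A B hcard hf hd hc hAB
    by_cases hex : ∃ p ∈ F, p ∈ Set.Ioo A B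
    · obtain ⟨p, hpF, hp⟩ := hex
      have h1 : c * (p - A) ≤ f p - f A := by
        apply ih (F.erase p) f c A p (by
          have := Finset.card_erase_of_mem hpF; omega)
          (hf.mono (Icc_subset_Icc le_rfl hp.2.le))
          (fun x hx hxF => hd x ⟨hx.1, hx.2.trans hp.2⟩ (fun hxF2 =>
            hxF (Finset.mem_erase.2 ⟨ne_of_lt hx.2, hxF2⟩)))
          (fun x hx hxF => hc x ⟨hx.1, hx.2.trans hp.2⟩ (fun hxF2 =>
            hxF (Finset.mem_erase.2 ⟨ne_of_lt hx.2, hxF2⟩)))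
          hp.1.le
      have h2 : c * (B - p) ≤ f B - f p := by
        apply ih (F.erase p) f c p B (by
          have := Finset.card_erase_of_mem hpF; omega)
          (hf.mono (Icc_subset_Icc hp.1.le le_rfl))
          (fun x hx hxF => hd x ⟨hp.1.trans hx.1, hx.2⟩ (fun hxF2 =>
            hxF (Finset.mem_erase.2 ⟨(ne_of_lt hx.1).symm, hxF2⟩)))
          (fun x hx hxF => hc x ⟨hp.1.trans hx.1, hx.2⟩ (fun hxF2 =>
            hxF (Finset.mem_erase.2 ⟨(ne_of_lt hx.1).symm, hxF2⟩)))
          hp.2.le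
      linarith
    · push_neg at hex
      exact st8_base f c A B hf (fun x hx => hd x hx (fun h => hex x h hx))
        (fun x hx => hc x hx (fun h => hex x h hx)) hAB

/-- Arc length along a small boundary arc is at most `√2` times Euclidean distance. -/
theorem statement8
    (Ω : Set (EuclideanSpace ℝ (Fin 2))) (hΩ : IsCompact Ω)
    (L : ℝ) (hL : 0 < L)
    (γ : ℝ → EuclideanSpace ℝ (Fin 2))
    (hcont : Continuous γ)
    (himg : γ '' Set.Icc 0 L = frontier Ω)
    (hclosed : γ 0 = γ L)
    (hinj : Set.InjOn γ (Set.Ico 0 L))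
    (F : Finset ℝ)
    (hdiff : ∀ t, t ∉ F → DifferentiableAt ℝ γ t)
    (harc : ∀ t, t ∉ F → ‖deriv γ t‖ = 1)
    (hTCne : ∀ t, (TanCone γ t).Nonempty)
    (r : ℝ) (hr : 0 < r)
    (hTCGL : ∀ s ∈ Set.Ico 0 L, TCGLAt Ω γ r s)
    -- the arc P = γ([t₁,t₂]) joins two points at distance < r and all pairs of its
    -- points are within distance < r of each other:
    (t₁ t₂ : ℝ) (ht₁ : t₁ ∈ Set.Ico 0 L) (ht₂ : t₂ ∈ Set.Ico 0 L) (ht12 : t₁ ≤ t₂)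
    (hends : dist (γ t₁) (γ t₂) < r)
    (hdiam : ∀ a ∈ Set.Icc t₁ t₂, ∀ b ∈ Set.Icc t₁ t₂, dist (γ a) (γ b) < r) :
    ∀ u₁ ∈ Set.Icc t₁ t₂, ∀ u₂ ∈ Set.Icc t₁ t₂, u₁ ≤ u₂ →
      u₂ - u₁ ≤ Real.sqrt 2 * dist (γ u₁) (γ u₂) := by
  intro u₁ hu₁ u₂ hu₂ h12
  rcases eq_or_lt_of_le h12 with rfl | hlt
  · rw [sub_self]
    exact mul_nonneg (Real.sqrt_nonneg 2) dist_nonneg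
  have ht12' : t₁ < t₂ := lt_of_le_of_lt hu₁.1 (lt_of_lt_of_le hlt hu₂.2)
  -- choice of right limits of the derivative
  have hGp : ∀ u : ℝ, ∃ G, Tendsto (deriv γ) (nhdsWithin u (Set.Ioi u)) (nhds G) := by
    intro u
    obtain ⟨w, Γm, Γp, hm, hp, _⟩ := hTCne u
    exact ⟨Γp, hp⟩
  choose Γ hΓ using hGp
  -- eventually not in F
  have hFev : ∀ u : ℝ, ∀ᶠ t in nhdsWithin u (Set.Ioi u), t ∉ F := by
    intro u
    have h1 : IsClosed ((↑F : Set ℝ) \ {u}) := (F.finite_toSet.subset diff_subset).isClosed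
    have h2 : ((↑F : Set ℝ) \ {u})ᶜ ∈ nhds u := h1.isOpen_compl.mem_nhds (by simp)
    filter_upwards [nhdsWithin_le_nhds h2, self_mem_nhdsWithin] with t ht ht2 htF
    exact ht ⟨htF, by simpa using (ne_of_gt ht2)⟩
  -- the right limits are unit vectors
  have hΓnorm : ∀ u : ℝ, ‖Γ u‖ = 1 := by
    intro u
    have h1 : Tendsto (fun t => ‖deriv γ t‖) (nhdsWithin u (Set.Ioi u)) (nhds ‖Γ u‖) :=
      (hΓ u).norm
    have h2 : Tendsto (fun t => ‖deriv γ t‖) (nhdsWithin u (Set.Ioi u)) (nhds 1) := by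
      have heq : (fun t => ‖deriv γ t‖) =ᶠ[nhdsWithin u (Set.Ioi u)] fun _ => 1 := by
        filter_upwards [hFev u] with t ht
        exact harc t ht
      exact Tendsto.congr' heq.symm tendsto_const_nhds
    exact tendsto_nhds_unique h1 h2
  have hΓmem : ∀ u : ℝ, Γ u ∈ TanCone γ u := by
    intro u
    obtain ⟨w, Γm, Γp, hm, hp, _⟩ := hTCne u
    have he : Γp = Γ u := tendsto_nhds_unique hp (hΓ u)
    exact ⟨Γm, Γ u, hm, he ▸ hp, 0, 1, le_rfl, zero_le_one, by norm_num, by simp⟩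
  -- membership facts
  have hmemB : ∀ s ∈ Set.Icc t₁ t₂, ∀ a ∈ Set.Icc t₁ t₂,
      γ a ∈ frontier Ω ∩ closedBall (γ s) r := by
    intro s hs a ha
    refine ⟨?_, ?_⟩
    · rw [← himg]
      exact ⟨a, ⟨le_trans ht₁.1 ha.1, le_trans ha.2 (le_of_lt ht₂.2)⟩, rfl⟩
    · exact mem_closedBall.2 (le_of_lt (hdiam a ha s hs))
  have hinj2 : ∀ a ∈ Set.Icc t₁ t₂, ∀ b ∈ Set.Icc t₁ t₂, γ a = γ b → a = b := by
    intro a ha b hb h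
    exact hinj ⟨le_trans ht₁.1 ha.1, lt_of_le_of_lt ha.2 ht₂.2⟩
      ⟨le_trans ht₁.1 hb.1, lt_of_le_of_lt hb.2 ht₂.2⟩ h
  -- derivative of the inner product with a constant vector
  have hgder : ∀ (w : EuclideanSpace ℝ (Fin 2)) (t : ℝ), t ∉ F →
      HasDerivAt (fun s => (⟪w, γ s⟫ : ℝ)) ⟪w, deriv γ t⟫ t := by
    intro w t ht
    have h := HasDerivAt.inner ℝ (hasDerivAt_const t w) (hdiff t ht).hasDerivAt
    simpa using h
  -- Step G : strict monotonicity of the projection along Γ u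
  have hsm : ∀ u ∈ Set.Ico t₁ t₂, StrictMonoOn (fun t => (⟪Γ u, γ t⟫ : ℝ)) (Set.Icc t₁ t₂) := by
    intro u hu
    set w := Γ u with hw
    set g : ℝ → ℝ := fun t => ⟪w, γ t⟫ with hgdef
    have hgc : Continuous g := continuous_const.inner hcont
    have huI : u ∈ Set.Icc t₁ t₂ := ⟨hu.1, hu.2.le⟩
    have hginj : Set.InjOn g (Set.Icc t₁ t₂) := by
      intro a ha b hb hab
      by_contra hne
      have hgab : γ a ≠ γ b := fun h => hne (hinj2 a ha b hb h)
      refine hTCGL u ⟨le_trans ht₁.1 hu.1, lt_trans hu.2 ht₂.2⟩ w (hΓmem u)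
        (γ a) (hmemB u huI a ha) (γ b) (hmemB u huI b hb) hgab ?_
      rw [inner_sub_right]
      rw [hgdef] at hab
      simp only at hab
      rw [hab]
      ring
    rcases hgc.continuousOn.strictMonoOn_of_injOn_Icc' ht12 hginj with hmono | hanti
    · exact hmono
    · exfalso
      -- find a good point t* to the right of u
      have hlim : Tendsto (fun t => (⟪w, deriv γ t⟫ : ℝ)) (nhdsWithin u (Set.Ioi u))
          (nhds ⟪w, w⟫) := Filter.Tendsto.inner tendsto_const_nhds (hΓ u)
      have hww : (1:ℝ)/2 < ⟪w, w⟫ := by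
        rw [real_inner_self_eq_norm_sq, hw, hΓnorm u]
        norm_num
      have hev : ∀ᶠ t in nhdsWithin u (Set.Ioi u), (1:ℝ)/2 < ⟪w, deriv γ t⟫ :=
        hlim.eventually (eventually_gt_nhds hww)
      have hIoo : Set.Ioo u t₂ ∈ nhdsWithin u (Set.Ioi u) :=
        Ioo_mem_nhdsGT_of_mem ⟨le_rfl, hu.2⟩
      obtain ⟨t0, h1, h2, h3⟩ := (hev.and ((hFev u).and (eventually_of_mem hIoo (fun x hx => hx)))).exists
      have ht0I : t0 ∈ Set.Icc t₁ t₂ := ⟨le_trans hu.1 h3.1.le, h3.2.le⟩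
      have hgd : HasDerivAt g ⟪w, deriv γ t0⟫ t0 := hgder w t0 h2
      have hslope : Tendsto (slope g t0) (nhdsWithin t0 (Set.Ioi t0)) (nhds ⟪w, deriv γ t0⟫) :=
        (hasDerivAt_iff_tendsto_slope.1 hgd).mono_left
          (nhdsWithin_mono _ (fun y hy => Set.mem_compl_singleton_iff.2 (ne_of_gt hy)))
      have hle : (⟪w, deriv γ t0⟫ : ℝ) ≤ 0 := by
        apply le_of_tendsto hslope
        filter_upwards [Ioo_mem_nhdsGT_of_mem ⟨le_rfl, h3.2⟩] with t ht
        have hta : t ∈ Set.Icc t₁ t₂ := ⟨le_trans ht0I.1 ht.1.le, ht.2.le⟩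
        have := hanti ht0I hta ht.1
        rw [slope_def_field]
        apply div_nonpos_of_nonpos_of_nonneg <;> linarith [ht.1]
      linarith
  -- Step H : nonnegativity of inner products with derivative
  have hkey : ∀ u ∈ Set.Ico t₁ t₂, ∀ t ∈ Set.Ioo t₁ t₂, t ∉ F →
      (0:ℝ) ≤ ⟪Γ u, deriv γ t⟫ := by
    intro u hu t ht htF
    have hmono := hsm u hu
    have hgd : HasDerivAt (fun s => (⟪Γ u, γ s⟫ : ℝ)) ⟪Γ u, deriv γ t⟫ t := hgder (Γ u) t htF
    have hslope : Tendsto (slope (fun s => (⟪Γ u, γ s⟫ : ℝ)) t) (nhdsWithin t (Set.Ioi t))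
        (nhds ⟪Γ u, deriv γ t⟫) :=
      (hasDerivAt_iff_tendsto_slope.1 hgd).mono_left
        (nhdsWithin_mono _ (fun y hy => Set.mem_compl_singleton_iff.2 (ne_of_gt hy)))
    apply ge_of_tendsto hslope
    filter_upwards [Ioo_mem_nhdsGT_of_mem ⟨le_rfl, ht.2⟩] with s hs
    have htI : t ∈ Set.Icc t₁ t₂ := ⟨ht.1.le, ht.2.le⟩
    have hsI : s ∈ Set.Icc t₁ t₂ := ⟨le_trans ht.1.le hs.1.le, hs.2.le⟩
    have := hmono htI hsI hs.1
    rw [slope_def_field]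
    apply div_nonneg <;> linarith [hs.1]
  -- Step I : deriv γ = Γ off F
  have hΓeq : ∀ s, s ∉ F → deriv γ s = Γ s := by
    intro s hs
    obtain ⟨b, hb, hsub⟩ := mem_nhdsGT_iff_exists_Ioo_subset.1
      (eventually_iff.1 (hFev s))
    have hdiffOn : DifferentiableOn ℝ γ (Set.Ioo s b) := fun x hx =>
      (hdiff x (hsub hx)).differentiableWithinAt
    have h1 : HasDerivWithinAt γ (Γ s) (Set.Ici s) s :=
      hasDerivWithinAt_Ici_of_tendsto_deriv hdiffOn hcont.continuousWithinAt
        (Ioo_mem_nhdsGT_of_mem ⟨le_rfl, hb⟩) (hΓ s)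
    have h2 : HasDerivWithinAt γ (deriv γ s) (Set.Ici s) s :=
      (hdiff s hs).hasDerivAt.hasDerivWithinAt
    have e1 := h1.derivWithin ((uniqueDiffOn_Ici s) s Set.self_mem_Ici)
    have e2 := h2.derivWithin ((uniqueDiffOn_Ici s) s Set.self_mem_Ici)
    rw [← e1, ← e2]
  -- Step J : the compact family of directions
  set S : Set (EuclideanSpace ℝ (Fin 2)) := deriv γ '' (Set.Ioo u₁ u₂ \ ↑F) with hS
  have hSne : S.Nonempty := by
    obtain ⟨x, hx⟩ := ((Set.Ioo_infinite hlt).diff F.finite_toSet).nonempty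
    exact ⟨deriv γ x, x, hx, rfl⟩
  have hSsub : S ⊆ sphere (0 : EuclideanSpace ℝ (Fin 2)) 1 := by
    rintro x ⟨t, ht, rfl⟩
    rw [mem_sphere_zero_iff_norm]
    exact harc t ht.2
  have hclosub : closure S ⊆ sphere (0 : EuclideanSpace ℝ (Fin 2)) 1 :=
    closure_minimal hSsub isClosed_sphere
  have hK : IsCompact (closure S) :=
    (isCompact_sphere (0 : EuclideanSpace ℝ (Fin 2)) 1).of_isClosed_subset isClosed_closure hclosub
  have hKne : (closure S).Nonempty := hSne.closure
  obtain ⟨⟨a, b⟩, habK, hmin⟩ := (hK.prod hK).exists_isMinOn (hKne.prod hKne)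
    (continuous_inner.continuousOn :
      ContinuousOn (fun p : EuclideanSpace ℝ (Fin 2) × EuclideanSpace ℝ (Fin 2) => (⟪p.1, p.2⟫ : ℝ)) _)
  have haK : a ∈ closure S := habK.1
  have hbK : b ∈ closure S := habK.2
  -- pairwise nonneg inner products on S
  have hpair : ∀ x ∈ S, ∀ y ∈ S, (0:ℝ) ≤ ⟪x, y⟫ := by
    rintro x ⟨s, hs, rfl⟩ y ⟨t, ht, rfl⟩
    have hsIco : s ∈ Set.Ico t₁ t₂ :=
      ⟨le_trans hu₁.1 hs.1.1.le, lt_of_lt_of_le hs.1.2 hu₂.2⟩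
    have htIoo : t ∈ Set.Ioo t₁ t₂ :=
      ⟨lt_of_le_of_lt hu₁.1 ht.1.1, lt_of_lt_of_le ht.1.2 hu₂.2⟩
    rw [hΓeq s hs.2]
    exact hkey s hsIco t htIoo ht.2
  have hpairc : ∀ x ∈ closure S, ∀ y ∈ closure S, (0:ℝ) ≤ ⟪x, y⟫ := by
    have step1 : ∀ y ∈ S, ∀ x ∈ closure S, (0:ℝ) ≤ ⟪x, y⟫ := by
      intro y hy
      have hcl : IsClosed {x : EuclideanSpace ℝ (Fin 2) | (0:ℝ) ≤ ⟪x, y⟫} :=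
        isClosed_le continuous_const (continuous_id.inner continuous_const)
      exact fun x hx => closure_minimal (fun z hz => hpair z hz y hy) hcl hx
    intro x hx
    have hcl : IsClosed {y : EuclideanSpace ℝ (Fin 2) | (0:ℝ) ≤ ⟪x, y⟫} :=
      isClosed_le continuous_const (continuous_const.inner continuous_id)
    exact fun y hy => closure_minimal (fun z hz => step1 z hz x hx) hcl hy
  have hnorm1 : ∀ x ∈ closure S, ‖x‖ = 1 := fun x hx =>
    mem_sphere_zero_iff_norm.1 (hclosub hx)
  have hm0 : (0:ℝ) ≤ ⟪a, b⟫ := hpairc a haK b hbK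
  have han : ‖a‖ = 1 := hnorm1 a haK
  have hbn : ‖b‖ = 1 := hnorm1 b hbK
  set m : ℝ := ⟪a, b⟫ with hmdef
  have habsq : ‖a + b‖^2 = 2 + 2*m := by
    rw [norm_add_sq_real, han, hbn]; ring
  have habpos : 0 < ‖a + b‖ := by
    nlinarith [norm_nonneg (a + b)]
  set e : EuclideanSpace ℝ (Fin 2) := ‖a + b‖⁻¹ • (a + b) with hedef
  have hen : ‖e‖ = 1 := by
    rw [hedef, norm_smul, norm_inv, norm_norm, inv_mul_cancel₀ habpos.ne']
  have hs2pos : 0 < Real.sqrt 2 := Real.sqrt_pos.2 (by norm_num)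
  have hs2 : Real.sqrt 2 ^ 2 = 2 := Real.sq_sqrt (by norm_num)
  -- Step K : uniform lower bound for the projection on e
  have hlow : ∀ t ∈ Set.Ioo u₁ u₂, t ∉ F → (Real.sqrt 2)⁻¹ ≤ ⟪e, deriv γ t⟫ := by
    intro t ht htF
    set c : EuclideanSpace ℝ (Fin 2) := deriv γ t with hcdef
    have hcS : c ∈ S := ⟨t, ⟨ht, htF⟩, rfl⟩
    have hcK : c ∈ closure S := subset_closure hcS
    have hcn : ‖c‖ = 1 := hnorm1 c hcK
    set x : ℝ := ⟪a, c⟫ with hxdef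
    set y : ℝ := ⟪b, c⟫ with hydef
    have hx : m ≤ x := isMinOn_iff.1 hmin (a, c) (Set.mk_mem_prod haK hcK)
    have hy : m ≤ y := isMinOn_iff.1 hmin (b, c) (Set.mk_mem_prod hbK hcK)
    have hy1 : y ≤ 1 := by
      have := real_inner_le_norm b c
      rw [hbn, hcn, one_mul] at this
      rw [hydef]
      exact this
    have hrel : x^2 + y^2 + m^2 = 1 + 2*m*x*y := st8_gram a b c han hbn hcn
    have hxy : m ≤ x*y := st8_quarter hm0 hx hy hy1 hrel
    have hsumsq : 1 + m ≤ (x + y)^2 := by nlinarith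
    have hsum0 : 0 ≤ x + y := by linarith
    have h5 : ‖a + b‖ ≤ Real.sqrt 2 * (x + y) := by
      nlinarith [hs2, Real.sqrt_nonneg 2, norm_nonneg (a + b), habsq, hsumsq, hsum0,
        mul_nonneg (Real.sqrt_nonneg 2) hsum0]
    have hec : (⟪e, c⟫ : ℝ) = ‖a + b‖⁻¹ * (x + y) := by
      rw [hedef, real_inner_smul_left, inner_add_left]
    rw [hec]
    have h6 : (Real.sqrt 2)⁻¹ * ‖a + b‖ ≤ x + y := by
      have h7 := mul_le_mul_of_nonneg_left h5 (inv_nonneg.2 hs2pos.le)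
      rwa [← mul_assoc, inv_mul_cancel₀ hs2pos.ne', one_mul] at h7
    rw [inv_mul_eq_div, le_div_iff₀ habpos]
    linarith
  -- Step L : conclusion via the mean value estimate
  have hfinal := st8_mono F.card F (fun t => (⟪e, γ t⟫ : ℝ)) (Real.sqrt 2)⁻¹ u₁ u₂ le_rfl
    ((continuous_const.inner hcont).continuousOn)
    (fun x hx hxF => (hgder e x hxF).differentiableAt)
    (fun x hx hxF => by rw [(hgder e x hxF).deriv]; exact hlow x hx hxF)
    h12
  have h8 : (⟪e, γ u₂⟫ : ℝ) - ⟪e, γ u₁⟫ = ⟪e, γ u₂ - γ u₁⟫ := (inner_sub_right _ _ _).symm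
  have h7 : (⟪e, γ u₂ - γ u₁⟫ : ℝ) ≤ dist (γ u₁) (γ u₂) := by
    calc (⟪e, γ u₂ - γ u₁⟫ : ℝ) ≤ ‖e‖ * ‖γ u₂ - γ u₁‖ := real_inner_le_norm _ _
    _ = dist (γ u₁) (γ u₂) := by rw [hen, one_mul, ← dist_eq_norm, dist_comm]
  have h9 : (Real.sqrt 2)⁻¹ * (u₂ - u₁) ≤ dist (γ u₁) (γ u₂) := by linarith
  have h10 := mul_le_mul_of_nonneg_left h9 hs2pos.le
  rw [← mul_assoc, mul_inv_cancel₀ hs2pos.ne', one_mul] at h10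
  exact h10
end
end

section
/- Suppose Ω is a region whose counterclockwise boundary satisfies, at a fixed point, the TGL condition for radius r, and suppose the quantities A = r(θ₂−θ₁) and B = r(sinθ₂ − sinθ₁) are known, where θ₁ ∈ (−π/2, π/2) and θ₂ ∈ (π/2, 3π/2). Then (θ₁, θ₂) is uniquely determined by (A, B): the map (θ₁,θ₂) ↦ (r(θ₂−θ₁), r(sinθ₂−sinθ₁)) is injective on (−π/2,π/2) × (π/2,3π/2). -/
open Real

lemma aux13 (a₁ a₂ b₁ b₂ : ℝ)
    (ha₁ : a₁ ∈ Set.Ioo (-(π/2)) (π/2)) (ha₂ : a₂ ∈ Set.Ioo (π/2) (3*π/2))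
    (hb₁ : b₁ ∈ Set.Ioo (-(π/2)) (π/2)) (hb₂ : b₂ ∈ Set.Ioo (π/2) (3*π/2))
    (hd : a₂ - a₁ = b₂ - b₁) (hlt : a₁ < b₁) :
    Real.sin b₂ - Real.sin b₁ < Real.sin a₂ - Real.sin a₁ := by
  set d := a₂ - a₁ with hdd
  have hb2 : b₂ = b₁ + d := by rw [hdd]; linarith
  have ha2 : a₂ = a₁ + d := by rw [hdd]; ring
  have hder : ∀ x ∈ Set.Ioo a₁ b₁,
      HasDerivAt (fun t => Real.sin (t + d) - Real.sin t)
        (Real.cos (x + d) - Real.cos x) x := by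
    intro x _
    have h1 : HasDerivAt (fun t => Real.sin (t + d)) (Real.cos (x + d) * 1) x :=
      by have h := (Real.hasDerivAt_sin (x + d)).comp x ((hasDerivAt_id x).add_const d); exact h
    have h2 := h1.sub (Real.hasDerivAt_sin x)
    rw [mul_one] at h2
    exact h2
  have hcont : ContinuousOn (fun t => Real.sin (t + d) - Real.sin t) (Set.Icc a₁ b₁) :=
    (Continuous.sub (Real.continuous_sin.comp (continuous_id.add continuous_const))
      Real.continuous_sin).continuousOn
  obtain ⟨c, hc, hceq⟩ := exists_hasDerivAt_eq_slope
    (fun t => Real.sin (t + d) - Real.sin t)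
    (fun x => Real.cos (x + d) - Real.cos x) hlt hcont hder
  have hcosc : 0 < Real.cos c :=
    Real.cos_pos_of_mem_Ioo ⟨lt_of_lt_of_le ha₁.1 hc.1.le, lt_of_le_of_lt hc.2.le hb₁.2⟩
  have hcoscd : Real.cos (c + d) < 0 := by
    apply Real.cos_neg_of_pi_div_two_lt_of_lt
    · have : a₂ < c + d := by linarith [hc.1]
      linarith [ha₂.1]
    · have : c + d < b₂ := by rw [hb2]; linarith [hc.2]
      have := hb₂.2
      linarith
  have hslope : (Real.sin (b₁ + d) - Real.sin b₁ - (Real.sin (a₁ + d) - Real.sin a₁)) / (b₁ - a₁) < 0 := by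
    rw [← hceq]; linarith
  have hpos : 0 < b₁ - a₁ := by linarith
  have := (div_neg_iff.mp hslope)
  rcases this with ⟨h1, h2⟩ | ⟨h1, h2⟩
  · linarith
  · rw [hb2, ha2]; linarith

/-- The map `(θ₁, θ₂) ↦ (r(θ₂−θ₁), r(sin θ₂ − sin θ₁))` is injective on
`(−π/2, π/2) × (π/2, 3π/2)`: the angles are uniquely determined by the two
first derivatives of the integral area invariant. -/
theorem statement13 (r : ℝ) (hr : 0 < r) :
    Set.InjOn (fun p : ℝ × ℝ => (r * (p.2 - p.1), r * (Real.sin p.2 - Real.sin p.1)))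
      (Set.Ioo (-(π/2)) (π/2) ×ˢ Set.Ioo (π/2) (3*π/2)) := by
  rintro ⟨a₁, a₂⟩ ⟨ha₁, ha₂⟩ ⟨b₁, b₂⟩ ⟨hb₁, hb₂⟩ h
  simp only [Prod.mk.injEq] at h
  obtain ⟨h1, h2⟩ := h
  have hd : a₂ - a₁ = b₂ - b₁ := mul_left_cancel₀ hr.ne' h1
  have hs : Real.sin a₂ - Real.sin a₁ = Real.sin b₂ - Real.sin b₁ :=
    mul_left_cancel₀ hr.ne' h2
  have hab : a₁ = b₁ := by
    rcases lt_trichotomy a₁ b₁ with hlt | heq | hgt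
    · exact absurd hs (by linarith [aux13 a₁ a₂ b₁ b₂ ha₁ ha₂ hb₁ hb₂ hd hlt])
    · exact heq
    · exact absurd hs (by linarith [aux13 b₁ b₂ a₁ a₂ hb₁ hb₂ ha₁ ha₂ hd.symm hgt])
  exact Prod.ext hab (by linarith)
end

section
/- For a disk of radius R, with g(s,r) = area(D ∩ D(γ(s),r)) the integral area invariant at a boundary point γ(s) of the disk, one has lim_{r→0} ∂/∂r [ g(s,r)/(πr²) ] = −1/(3πR). Equivalently, the curvature 1/R of the circle satisfies κ = −3π · lim_{r→0} ∂/∂r (g(s,r)/(πr²)). -/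
open Metric Set Filter MeasureTheory Real

noncomputable def Aa (R r : ℝ) : ℝ :=
  r^2 * arcsin (sqrt (4*R^2 - r^2) / (2*R))
    + R^2 * arcsin (r * sqrt (4*R^2 - r^2) / (2*R^2))
    - r * sqrt (4*R^2 - r^2) / 2

noncomputable def qq (R r : ℝ) : ℝ := r * sqrt (4*R^2 - r^2) / (2*R)

noncomputable def ff (R r x : ℝ) : ℝ := sqrt (R^2 - x^2) + sqrt (r^2 - x^2) - R

noncomputable def Phi (R r x : ℝ) : ℝ :=
  (x * sqrt (R^2 - x^2) + R^2 * arcsin (x/R))/2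
    + (x * sqrt (r^2 - x^2) + r^2 * arcsin (x/r))/2 - R*x

lemma hasDeriv_piece {a x : ℝ} (ha : 0 < a) (hx : x^2 < a^2) :
    HasDerivAt (fun y => (y * sqrt (a^2 - y^2) + a^2 * arcsin (y/a))/2) (sqrt (a^2 - x^2)) x := by
  have hpos : 0 < a^2 - x^2 := by linarith
  have hs : 0 < sqrt (a^2 - x^2) := Real.sqrt_pos.2 hpos
  have hs2 : sqrt (a^2 - x^2) ^ 2 = a^2 - x^2 := Real.sq_sqrt hpos.le
  have h1 : HasDerivAt (fun y : ℝ => a^2 - y^2) (-(2*x)) x := by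
    simpa using (hasDerivAt_pow 2 x).const_sub (a^2)
  have hsq : HasDerivAt (fun y : ℝ => sqrt (a^2 - y^2))
      (1 / (2 * sqrt (a^2 - x^2)) * -(2*x)) x :=
    (Real.hasDerivAt_sqrt (ne_of_gt hpos)).comp x h1
  have hxa : |x / a| < 1 := by
    rw [abs_div, abs_of_pos ha, div_lt_one ha]
    have : |x| ^ 2 < a ^ 2 := by rwa [sq_abs]
    nlinarith [abs_nonneg x]
  have harc : HasDerivAt (fun y : ℝ => arcsin (y/a))
      (1 / sqrt (1 - (x/a)^2) * (1/a)) x := by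
    rw [abs_lt] at hxa
    have := (Real.hasDerivAt_arcsin (ne_of_gt hxa.1) (ne_of_lt hxa.2)).comp x
      ((hasDerivAt_id x).div_const a)
    exact this
  have hmain := (((hasDerivAt_id x).mul hsq).add (harc.const_mul (a^2))).div_const 2
  refine hmain.congr_deriv (Eq.symm ?_)
  have hsim : sqrt (1 - (x/a)^2) = sqrt (a^2 - x^2) / a := by
    rw [show 1 - (x/a)^2 = (a^2 - x^2)/a^2 by field_simp,
      Real.sqrt_div hpos.le, Real.sqrt_sq ha.le]
  rw [hsim]
  field_simp
  simp only [id_eq]; linear_combination hs2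


lemma q_lt_r {R r : ℝ} (hR : 0 < R) (hr : 0 < r) (hrR : r ≤ R) : (qq R r)^2 < r^2 := by
  have h4 : (0:ℝ) ≤ 4*R^2 - r^2 := by nlinarith
  have hs2 : sqrt (4*R^2 - r^2) ^ 2 = 4*R^2 - r^2 := Real.sq_sqrt h4
  simp only [qq]
  rw [div_pow, mul_pow, hs2, div_lt_iff₀ (by positivity)]
  nlinarith [pow_pos hr 4]

lemma sqrt_Rq {R r : ℝ} (hR : 0 < R) (hr : 0 < r) (hrR : r ≤ R) :
    sqrt (R^2 - (qq R r)^2) = (2*R^2 - r^2)/(2*R) := by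
  have h4 : (0:ℝ) ≤ 4*R^2 - r^2 := by nlinarith
  have hs2 : sqrt (4*R^2 - r^2) ^ 2 = 4*R^2 - r^2 := Real.sq_sqrt h4
  have : R^2 - (qq R r)^2 = ((2*R^2 - r^2)/(2*R))^2 := by
    simp only [qq]; field_simp; rw [show R^2*4 - r^2 = 4*R^2 - r^2 by ring, hs2]; ring
  rw [this, Real.sqrt_sq (div_nonneg (by nlinarith) (by positivity))]

lemma sqrt_rq {R r : ℝ} (hR : 0 < R) (hr : 0 < r) (hrR : r ≤ R) :
    sqrt (r^2 - (qq R r)^2) = r^2/(2*R) := by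
  have h4 : (0:ℝ) ≤ 4*R^2 - r^2 := by nlinarith
  have hs2 : sqrt (4*R^2 - r^2) ^ 2 = 4*R^2 - r^2 := Real.sq_sqrt h4
  have : r^2 - (qq R r)^2 = (r^2/(2*R))^2 := by
    simp only [qq]; field_simp; nlinarith [hs2]
  rw [this, Real.sqrt_sq (by positivity)]

lemma integral_ff (R r : ℝ) (hR : 0 < R) (hr : 0 < r) (hrR : r ≤ R) :
    ∫ x in (-(qq R r))..(qq R r), ff R r x = Aa R r := by
  have hq0 : 0 ≤ qq R r := by simp only [qq]; positivity
  have hq2 : (qq R r)^2 < r^2 := q_lt_r hR hr hrR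
  have hq2R : (qq R r)^2 < R^2 := lt_of_lt_of_le hq2 (by nlinarith)
  have hderiv : ∀ x ∈ uIcc (-(qq R r)) (qq R r), HasDerivAt (Phi R r) (ff R r x) x := by
    intro x hx
    rw [uIcc_of_le (by linarith)] at hx
    have hx2 : x^2 ≤ (qq R r)^2 := by rcases hx with ⟨h1, h2⟩; nlinarith
    have H := ((hasDeriv_piece hR (lt_of_le_of_lt hx2 hq2R)).add
      (hasDeriv_piece hr (lt_of_le_of_lt hx2 hq2))).sub ((hasDerivAt_id x).const_mul R)
    exact H.congr_deriv (by simp [ff])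
  have hcont : ContinuousOn (ff R r) (uIcc (-(qq R r)) (qq R r)) := by
    apply Continuous.continuousOn
    unfold ff
    fun_prop
  rw [intervalIntegral.integral_eq_sub_of_hasDerivAt hderiv
    hcont.intervalIntegrable]
  have hodd : Phi R r (-(qq R r)) = - Phi R r (qq R r) := by
    simp [Phi, neg_div, Real.arcsin_neg, neg_sq]; ring
  rw [hodd]
  simp only [Phi, Aa, sqrt_Rq hR hr hrR, sqrt_rq hR hr hrR]
  have hqR : qq R r / R = r * sqrt (4*R^2-r^2)/(2*R^2) := by
    simp only [qq]; rw [div_div]; ring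
  have hqr : qq R r / r = sqrt (4*R^2-r^2)/(2*R) := by
    simp only [qq]; rw [div_div, mul_comm 2 R, ← div_div, mul_div_assoc, mul_comm,
      mul_div_assoc, div_self hr.ne', mul_one]
  rw [hqR, hqr]
  simp only [qq]
  field_simp
  ring

lemma ff_nonpos {R r x : ℝ} (hR : 0 < R) (hr : 0 < r) (hrR : r ≤ R)
    (hx : (qq R r)^2 ≤ x^2) : ff R r x ≤ 0 := by
  have h1 : sqrt (r^2 - x^2) ≤ r^2/(2*R) := by
    rw [← sqrt_rq hR hr hrR]
    exact Real.sqrt_le_sqrt (by linarith)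
  have h2 : sqrt (R^2 - x^2) ≤ (2*R^2 - r^2)/(2*R) := by
    rw [← sqrt_Rq hR hr hrR]
    exact Real.sqrt_le_sqrt (by linarith)
  have : r^2/(2*R) + (2*R^2 - r^2)/(2*R) = R := by field_simp; ring
  simp only [ff]; linarith

lemma ff_nonneg {R r x : ℝ} (hR : 0 < R) (hr : 0 < r) (hrR : r ≤ R)
    (hx : x^2 ≤ (qq R r)^2) : 0 ≤ ff R r x := by
  have h1 : r^2/(2*R) ≤ sqrt (r^2 - x^2) := by
    rw [← sqrt_rq hR hr hrR]
    exact Real.sqrt_le_sqrt (by linarith)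
  have h2 : (2*R^2 - r^2)/(2*R) ≤ sqrt (R^2 - x^2) := by
    rw [← sqrt_Rq hR hr hrR]
    exact Real.sqrt_le_sqrt (by linarith)
  have : r^2/(2*R) + (2*R^2 - r^2)/(2*R) = R := by field_simp; ring
  simp only [ff]; linarith

lemma integral_max (R r : ℝ) (hR : 0 < R) (hr : 0 < r) (hrR : r ≤ R) :
    ∫ x, max (ff R r x) 0 = Aa R r := by
  have hq0 : 0 ≤ qq R r := by simp only [qq]; positivity
  have b1 : ∀ x, x ∉ Icc (-(qq R r)) (qq R r) → max (ff R r x) 0 = 0 := by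
    intro x hx
    rw [mem_Icc, not_and_or, not_le, not_le] at hx
    refine max_eq_right (ff_nonpos hR hr hrR ?_)
    rcases hx with h | h <;> nlinarith
  rw [← setIntegral_eq_integral_of_forall_compl_eq_zero b1]
  rw [setIntegral_congr_fun measurableSet_Icc
    (fun x hx => max_eq_left (ff_nonneg hR hr hrR (by rcases hx with ⟨h1,h2⟩; nlinarith)))]
  rw [integral_Icc_eq_integral_Ioc, ← intervalIntegral.integral_of_le (by linarith)]
  exact integral_ff R r hR hr hrR

lemma ff_continuous (R r : ℝ) : Continuous (fun x => max (ff R r x) 0) := by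
  unfold ff; fun_prop

lemma lint_ff (R r : ℝ) (hR : 0 < R) (hr : 0 < r) (hrR : r ≤ R) :
    ∫⁻ x, ENNReal.ofReal (ff R r x) = ENNReal.ofReal (Aa R r) := by
  have hq0 : 0 ≤ qq R r := by simp only [qq]; positivity
  have hmax : ∀ x : ℝ, ENNReal.ofReal (ff R r x) = ENNReal.ofReal (max (ff R r x) 0) := by
    intro x
    rcases le_total (ff R r x) 0 with h | h
    · rw [max_eq_right h, ENNReal.ofReal_zero, ENNReal.ofReal_eq_zero.2 h]
    · rw [max_eq_left h]
  simp only [hmax]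
  have hcs : HasCompactSupport (fun x => max (ff R r x) 0) := by
    apply HasCompactSupport.intro (isCompact_Icc (a := -(qq R r)) (b := qq R r))
    intro x hx
    rw [mem_Icc, not_and_or, not_le, not_le] at hx
    refine max_eq_right (ff_nonpos hR hr hrR ?_)
    rcases hx with h | h <;> nlinarith
  have hint : Integrable (fun x => max (ff R r x) 0) :=
    (ff_continuous R r).integrable_of_hasCompactSupport hcs
  rw [← MeasureTheory.ofReal_integral_eq_lintegral_ofReal hint
    (Eventually.of_forall fun x => le_max_right _ _), integral_max R r hR hr hrR]

lemma volume_T (R r : ℝ) (hR : 0 < R) (hr : 0 < r) (hrR : r ≤ R) :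
    volume {z : ℝ × ℝ | z.1^2 + (z.2+R)^2 ≤ R^2 ∧ z.1^2 + z.2^2 ≤ r^2}
      = ENNReal.ofReal (Aa R r) := by
  have hTm : MeasurableSet {z : ℝ × ℝ | z.1^2 + (z.2+R)^2 ≤ R^2 ∧ z.1^2 + z.2^2 ≤ r^2} := by
    rw [Set.setOf_and]
    exact (measurableSet_le (by fun_prop) measurable_const).inter
      (measurableSet_le (by fun_prop) measurable_const)
  rw [MeasureTheory.Measure.volume_eq_prod, Measure.prod_apply hTm]
  have hslice : ∀ x : ℝ, volume {y : ℝ | x^2 + (y+R)^2 ≤ R^2 ∧ x^2 + y^2 ≤ r^2}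
      = ENNReal.ofReal (ff R r x) := by
    intro x
    rcases le_or_gt (x^2) (r^2) with hx | hx
    · have hxR : x^2 ≤ R^2 := le_trans hx (by nlinarith)
      have hs1 : sqrt (r^2 - x^2) ^ 2 = r^2 - x^2 := Real.sq_sqrt (by linarith)
      have hs2 : sqrt (R^2 - x^2) ^ 2 = R^2 - x^2 := Real.sq_sqrt (by linarith)
      have hs1r : sqrt (r^2 - x^2) ≤ r := by
        have := Real.sqrt_le_sqrt (show r^2 - x^2 ≤ r^2 by nlinarith [sq_nonneg x])
        rwa [Real.sqrt_sq hr.le] at this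
      have hs2R : sqrt (R^2 - x^2) ≤ R := by
        have := Real.sqrt_le_sqrt (show R^2 - x^2 ≤ R^2 by nlinarith [sq_nonneg x])
        rwa [Real.sqrt_sq hR.le] at this
      have hset : {y : ℝ | x^2 + (y+R)^2 ≤ R^2 ∧ x^2 + y^2 ≤ r^2}
          = Icc (-sqrt (r^2 - x^2)) (-R + sqrt (R^2 - x^2)) := by
        ext y
        simp only [mem_setOf_eq, mem_Icc]
        constructor
        · rintro ⟨h1, h2⟩
          have hy : |y| ≤ sqrt (r^2 - x^2) := by
            rw [← Real.sqrt_sq_eq_abs]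
            exact Real.sqrt_le_sqrt (by linarith)
          have hyR : |y + R| ≤ sqrt (R^2 - x^2) := by
            rw [← Real.sqrt_sq_eq_abs]
            exact Real.sqrt_le_sqrt (by linarith)
          rw [abs_le] at hy hyR
          constructor <;> linarith [hy.1, hyR.2]
        · rintro ⟨h1, h2⟩
          have hynn : -R ≤ y := by nlinarith [Real.sqrt_nonneg (r^2 - x^2)]
          constructor <;> nlinarith [Real.sqrt_nonneg (R^2 - x^2), Real.sqrt_nonneg (r^2 - x^2)]
      rw [hset, Real.volume_Icc]
      congr 1
      simp only [ff]; ring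
    · have hempty : {y : ℝ | x^2 + (y+R)^2 ≤ R^2 ∧ x^2 + y^2 ≤ r^2} = ∅ := by
        ext y; simp only [mem_setOf_eq, mem_empty_iff_false, iff_false, not_and]
        intro _; nlinarith [sq_nonneg y]
      rw [hempty, measure_empty, eq_comm, ENNReal.ofReal_eq_zero]
      have h1 : sqrt (r^2 - x^2) = 0 := Real.sqrt_eq_zero'.mpr (by linarith)
      have h2 : sqrt (R^2 - x^2) ≤ R := by
        have := Real.sqrt_le_sqrt (show R^2 - x^2 ≤ R^2 by nlinarith [sq_nonneg x])
        rwa [Real.sqrt_sq hR.le] at this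
      simp only [ff]; linarith
  calc ∫⁻ x, volume (Prod.mk x ⁻¹' {z : ℝ × ℝ | z.1^2 + (z.2+R)^2 ≤ R^2 ∧ z.1^2 + z.2^2 ≤ r^2})
      = ∫⁻ x, ENNReal.ofReal (ff R r x) := by
        apply lintegral_congr
        intro x
        exact hslice x
    _ = ENNReal.ofReal (Aa R r) := lint_ff R r hR hr hrR

lemma vol_ball_inter (R r : ℝ) (hR : 0 < R) (hr : 0 < r) (hrR : r ≤ R)
    (c p : EuclideanSpace ℝ (Fin 2)) (hp : dist p c = R) :
    volume (closedBall c R ∩ closedBall p r) = ENNReal.ofReal (Aa R r) := by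
  classical
  set v₀ : EuclideanSpace ℝ (Fin 2) := (WithLp.equiv 2 _).symm ![0, -R] with hv₀
  have hv0 : v₀ 0 = 0 := rfl
  have hv1 : v₀ 1 = -R := rfl
  have hnv : ‖v₀‖ = R := by
    rw [EuclideanSpace.norm_eq, Fin.sum_univ_two, hv0, hv1]
    simp only [norm_zero, norm_neg, Real.norm_eq_abs, abs_of_pos hR]
    rw [show (0:ℝ)^2 + R^2 = R^2 by ring]
    exact Real.sqrt_sq hR.le
  have hncp : ‖c - p‖ = R := by rw [← dist_eq_norm, dist_comm c p]; exact hp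
  set e := Submodule.reflection (ℝ ∙ ((c - p) - v₀))ᗮ with he
  have hecp : e (c - p) = v₀ := Submodule.reflection_sub (by rw [hncp, hnv])
  set f : EuclideanSpace ℝ (Fin 2) → EuclideanSpace ℝ (Fin 2) := fun x => e (x - p) with hf
  have hmpf : MeasurePreserving f volume volume := by
    have h1 : MeasurePreserving (fun x : EuclideanSpace ℝ (Fin 2) => x + (-p))
        volume volume := measurePreserving_add_right volume (-p)
    have h2 : MeasurePreserving (⇑e) volume volume := e.measurePreserving
    have := h2.comp h1
    simpa [Function.comp_def, sub_eq_add_neg, hf] using this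
  have hset : closedBall c R ∩ closedBall p r = f ⁻¹' (closedBall v₀ R ∩ closedBall 0 r) := by
    ext x
    simp only [mem_inter_iff, mem_preimage, mem_closedBall, hf]
    have d1 : dist (e (x - p)) v₀ = dist x c := by
      rw [← hecp, e.dist_map, dist_sub_right]
    have d2 : dist (e (x - p)) 0 = dist x p := by
      rw [show (0 : EuclideanSpace ℝ (Fin 2)) = e 0 by simp, e.dist_map,
        show (0 : EuclideanSpace ℝ (Fin 2)) = p - p by simp, dist_sub_right]
    rw [d1, d2]
  rw [hset, hmpf.measure_preimage
    ((measurableSet_closedBall.inter measurableSet_closedBall).nullMeasurableSet)]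
  -- now transfer to ℝ × ℝ
  have hmpg : MeasurePreserving
      (fun x : EuclideanSpace ℝ (Fin 2) =>
        MeasurableEquiv.finTwoArrow (WithLp.ofLp x))
      volume volume :=
    (volume_preserving_finTwoArrow ℝ).comp (PiLp.volume_preserving_ofLp (Fin 2))
  have hsetT : closedBall v₀ R ∩ closedBall 0 r
      = (fun x : EuclideanSpace ℝ (Fin 2) =>
          MeasurableEquiv.finTwoArrow (WithLp.ofLp x)) ⁻¹'
        {z : ℝ × ℝ | z.1^2 + (z.2+R)^2 ≤ R^2 ∧ z.1^2 + z.2^2 ≤ r^2} := by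
    ext x
    simp only [mem_inter_iff, mem_preimage, mem_closedBall, mem_setOf_eq,
      MeasurableEquiv.finTwoArrow_apply]
    have hd1 : dist x v₀ = sqrt ((x 0)^2 + (x 1 + R)^2) := by
      rw [EuclideanSpace.dist_eq, Fin.sum_univ_two, hv0, hv1]
      congr 1
      rw [Real.dist_eq, Real.dist_eq, sq_abs, sq_abs]
      ring_nf
    have hd2 : dist x 0 = sqrt ((x 0)^2 + (x 1)^2) := by
      rw [EuclideanSpace.dist_eq, Fin.sum_univ_two]
      congr 1
      simp [Real.dist_eq, sq_abs]
    rw [hd1, hd2, Real.sqrt_le_iff, Real.sqrt_le_iff]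
    constructor
    · rintro ⟨⟨_, h1⟩, ⟨_, h2⟩⟩
      exact ⟨h1, h2⟩
    · rintro ⟨h1, h2⟩
      exact ⟨⟨hR.le, h1⟩, ⟨hr.le, h2⟩⟩
  rw [hsetT, hmpg.measure_preimage]
  · exact volume_T R r hR hr hrR
  · refine MeasurableSet.nullMeasurableSet ?_
    rw [Set.setOf_and]
    exact (measurableSet_le (by fun_prop) measurable_const).inter
      (measurableSet_le (by fun_prop) measurable_const)

section derivs
variable {R r : ℝ}

lemma s_facts (hR : 0 < R) (hr : 0 < r) (hrR : r < R) :
    0 < 4*R^2 - r^2 ∧ sqrt (4*R^2 - r^2)^2 = 4*R^2 - r^2 ∧ 0 < sqrt (4*R^2 - r^2)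
      ∧ sqrt (4*R^2 - r^2) < 2*R := by
  have h4 : 0 < 4*R^2 - r^2 := by nlinarith
  have hs2 : sqrt (4*R^2 - r^2)^2 = 4*R^2 - r^2 := Real.sq_sqrt h4.le
  have hsp : 0 < sqrt (4*R^2 - r^2) := Real.sqrt_pos.2 h4
  exact ⟨h4, hs2, hsp, by nlinarith⟩

lemma hasDerivAt_s (hR : 0 < R) (hr : 0 < r) (hrR : r < R) :
    HasDerivAt (fun x : ℝ => sqrt (4*R^2 - x^2)) (-(r / sqrt (4*R^2 - r^2))) r := by
  obtain ⟨h4, hs2, hsp, hslt⟩ := s_facts hR hr hrR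
  have h1 : HasDerivAt (fun x : ℝ => 4*R^2 - x^2) (-(2*r)) r := by
    simpa using (hasDerivAt_pow 2 r).const_sub (4*R^2)
  have := (Real.hasDerivAt_sqrt h4.ne').comp r h1
  refine this.congr_deriv (Eq.symm ?_)
  field_simp

lemma hasDerivAt_u (hR : 0 < R) (hr : 0 < r) (hrR : r < R) :
    HasDerivAt (fun x : ℝ => arcsin (sqrt (4*R^2 - x^2)/(2*R)))
      (-(1 / sqrt (4*R^2 - r^2))) r := by
  obtain ⟨h4, hs2, hsp, hslt⟩ := s_facts hR hr hrR
  have harg : sqrt (4*R^2 - r^2)/(2*R) < 1 := by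
    rw [div_lt_one (by positivity)]; exact hslt
  have harg0 : 0 < sqrt (4*R^2 - r^2)/(2*R) := by positivity
  have hinner := (hasDerivAt_s hR hr hrR).div_const (2*R)
  have := (Real.hasDerivAt_arcsin (by linarith : sqrt (4*R^2 - r^2)/(2*R) ≠ -1)
    (ne_of_lt harg)).comp r hinner
  refine this.congr_deriv (Eq.symm ?_)
  have hsim : sqrt (1 - (sqrt (4*R^2 - r^2)/(2*R))^2) = r/(2*R) := by
    rw [show 1 - (sqrt (4*R^2 - r^2)/(2*R))^2 = (r/(2*R))^2 by
      rw [div_pow, div_pow, hs2]; field_simp; ring]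
    exact Real.sqrt_sq (by positivity)
  rw [hsim]
  field_simp

lemma hasDerivAt_v (hR : 0 < R) (hr : 0 < r) (hrR : r < R) :
    HasDerivAt (fun x : ℝ => arcsin (x * sqrt (4*R^2 - x^2)/(2*R^2)))
      (2 / sqrt (4*R^2 - r^2)) r := by
  obtain ⟨h4, hs2, hsp, hslt⟩ := s_facts hR hr hrR
  have hprod : r * sqrt (4*R^2 - r^2) < 2*R^2 := by
    nlinarith [sq_nonneg (r * sqrt (4*R^2 - r^2) - 2*R^2), sq_nonneg (2*R^2 - r^2),
      mul_pos hr hsp]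
  have harg : r * sqrt (4*R^2 - r^2)/(2*R^2) < 1 := by
    rw [div_lt_one (by positivity)]; exact hprod
  have harg0 : 0 < r * sqrt (4*R^2 - r^2)/(2*R^2) := by positivity
  have hinner := (((hasDerivAt_id r).mul (hasDerivAt_s hR hr hrR)).div_const (2*R^2))
  have := (Real.hasDerivAt_arcsin (by linarith : r * sqrt (4*R^2 - r^2)/(2*R^2) ≠ -1)
    (ne_of_lt harg)).comp r hinner
  refine this.congr_deriv (Eq.symm ?_)
  have h2Rr : 0 < 2*R^2 - r^2 := by nlinarith
  have hsim : sqrt (1 - (r * sqrt (4*R^2 - r^2)/(2*R^2))^2) = (2*R^2 - r^2)/(2*R^2) := by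
    rw [show 1 - (r * sqrt (4*R^2 - r^2)/(2*R^2))^2 = ((2*R^2 - r^2)/(2*R^2))^2 by
      rw [div_pow, mul_pow, hs2]; field_simp; ring]
    exact Real.sqrt_sq (by positivity)
  rw [hsim]
  field_simp
  ring_nf
  rw [show R^2*4 - r^2 = 4*R^2 - r^2 by ring, hs2]; simp only [id_eq]; ring

lemma hasDerivAt_Aa (hR : 0 < R) (hr : 0 < r) (hrR : r < R) :
    HasDerivAt (Aa R) (2*r*arcsin (sqrt (4*R^2 - r^2)/(2*R))) r := by
  obtain ⟨h4, hs2, hsp, hslt⟩ := s_facts hR hr hrR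
  have t1 := (hasDerivAt_pow 2 r).mul (hasDerivAt_u hR hr hrR)
  have t2 := (hasDerivAt_v hR hr hrR).const_mul (R^2)
  have t3 := ((hasDerivAt_id r).mul (hasDerivAt_s hR hr hrR)).div_const 2
  have H := (t1.add t2).sub t3
  have : Aa R = fun x : ℝ => x^2 * arcsin (sqrt (4*R^2 - x^2)/(2*R))
      + R^2 * arcsin (x * sqrt (4*R^2 - x^2)/(2*R^2)) - x * sqrt (4*R^2 - x^2)/2 := by
    funext x; simp only [Aa]
  rw [this]
  refine H.congr_deriv (Eq.symm ?_)
  field_simp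
  ring_nf
  rw [show -r^2 + R^2*4 = 4*R^2 - r^2 by ring, hs2]; simp only [id_eq]; ring

lemma hasDerivAt_G (hR : 0 < R) (hr : 0 < r) (hrR : r < R) :
    HasDerivAt (fun x : ℝ => x^2 * arcsin (sqrt (4*R^2 - x^2)/(2*R)) - Aa R x)
      (-(r^2 / sqrt (4*R^2 - r^2))) r := by
  obtain ⟨h4, hs2, hsp, hslt⟩ := s_facts hR hr hrR
  have t1 := (hasDerivAt_pow 2 r).mul (hasDerivAt_u hR hr hrR)
  have H := t1.sub (hasDerivAt_Aa hR hr hrR)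
  refine H.congr_deriv (Eq.symm ?_)
  field_simp
  ring

end derivs

lemma Aa_nonneg (R r : ℝ) (hR : 0 < R) (hr : 0 < r) (hrR : r ≤ R) : 0 ≤ Aa R r := by
  rw [← integral_max R r hR hr hrR]
  exact integral_nonneg fun x => le_max_right _ _

lemma Aa_zero (R : ℝ) : Aa R 0 = 0 := by simp [Aa]

lemma Aa_continuous (R : ℝ) : Continuous (Aa R) := by
  unfold Aa
  continuity

lemma sqrt_4R (R : ℝ) (hR : 0 < R) : sqrt (4*R^2 - 0^2) = 2*R := by
  rw [show 4*R^2 - 0^2 = (2*R)^2 by ring]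
  exact Real.sqrt_sq (by positivity)

lemma tendsto_G_div (R : ℝ) (hR : 0 < R) :
    Tendsto (fun r => (r^2 * arcsin (sqrt (4*R^2 - r^2)/(2*R)) - Aa R r) / r^3)
      (nhdsWithin 0 (Set.Ioi 0)) (nhds (-1/(6*R))) := by
  apply HasDerivAt.lhopital_zero_right_on_Ioo (f' := fun x => -(x^2 / sqrt (4*R^2 - x^2)))
    (g' := fun x => 3*x^2) hR
  · intro x hx; exact hasDerivAt_G hR hx.1 hx.2
  · intro x hx; simpa using hasDerivAt_pow 3 x
  · intro x hx
    have h := hx.1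
    positivity
  · have hcont : Continuous (fun x : ℝ =>
        x^2 * arcsin (sqrt (4*R^2 - x^2)/(2*R)) - Aa R x) := by
      have h := Aa_continuous R
      apply Continuous.sub _ h
      continuity
    have := (hcont.tendsto 0).mono_left
      (nhdsWithin_le_nhds (s := Set.Ioi (0:ℝ)))
    convert this using 2
    simp [Aa_zero]
  · have : Tendsto (fun x : ℝ => x^3) (nhds 0) (nhds 0) := by
      simpa using (continuous_pow 3).tendsto (0:ℝ)
    exact this.mono_left nhdsWithin_le_nhds
  · have hev : (fun x : ℝ => -(x^2 / sqrt (4*R^2 - x^2)) / (3*x^2))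
        =ᶠ[nhdsWithin 0 (Set.Ioi 0)] (fun x => -(1 / (3 * sqrt (4*R^2 - x^2)))) := by
      filter_upwards [Ioo_mem_nhdsGT_of_mem (Set.mem_Ico.2 ⟨le_refl 0, hR⟩)] with x hx
      obtain ⟨h4, hs2, hsp, hslt⟩ := s_facts hR hx.1 hx.2
      show -(x^2 / sqrt (4*R^2 - x^2)) / (3*x^2) = -(1 / (3 * sqrt (4*R^2 - x^2)))
      rw [neg_div]
      congr 1
      rw [div_div]
      rw [div_eq_div_iff (ne_of_gt (by nlinarith [hx.1, hsp, mul_pos hx.1 hx.1] :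
        (0:ℝ) < sqrt (4*R^2 - x^2) * (3*x^2))) (ne_of_gt (by positivity :
        (0:ℝ) < 3 * sqrt (4*R^2 - x^2)))]
      ring
    have hlim : Tendsto (fun x : ℝ => -(1 / (3 * sqrt (4*R^2 - x^2))))
        (nhdsWithin 0 (Set.Ioi 0)) (nhds (-1/(6*R))) := by
      have hc : ContinuousAt (fun x : ℝ => -(1 / (3 * sqrt (4*R^2 - x^2)))) 0 := by
        apply ContinuousAt.neg
        apply ContinuousAt.div continuousAt_const
        · fun_prop
        · show (3:ℝ) * sqrt (4*R^2 - (0:ℝ)^2) ≠ 0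
          rw [sqrt_4R R hR]; positivity
      have := hc.tendsto.mono_left (nhdsWithin_le_nhds (s := Set.Ioi (0:ℝ)))
      convert this using 2
      rw [sqrt_4R R hR]; ring
    exact Tendsto.congr' hev.symm hlim

/-- For a disk of radius `R`, the normalized nonasymptotic density at a boundary point
satisfies `lim_{r→0} ∂/∂r [g(s,r)/(πr²)] = −1/(3πR)`, i.e. the curvature `1/R` equals
`−3π` times this limit. -/
theorem statement14
    (R : ℝ) (hR : 0 < R)
    (c p : EuclideanSpace ℝ (Fin 2)) (hp : p ∈ sphere c R) :
    Tendsto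
      (fun r => deriv
        (fun ρ => (volume (closedBall c R ∩ closedBall p ρ)).toReal / (π * ρ ^ 2)) r)
      (nhdsWithin 0 (Set.Ioi 0)) (nhds (-1 / (3 * π * R))) := by
  have hπ : (0:ℝ) < π := Real.pi_pos
  have hp' : dist p c = R := by rwa [mem_sphere] at hp
  set volFn : ℝ → ℝ :=
    fun ρ => (volume (closedBall c R ∩ closedBall p ρ)).toReal / (π * ρ ^ 2) with hvolFn
  set Fc : ℝ → ℝ := fun ρ => Aa R ρ / (π * ρ ^ 2) with hFc
  have heq : ∀ ρ ∈ Ioo (0:ℝ) R, volFn ρ = Fc ρ := by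
    intro ρ hρ
    simp only [hvolFn, hFc]
    rw [vol_ball_inter R ρ hR hρ.1 hρ.2.le c p hp',
      ENNReal.toReal_ofReal (Aa_nonneg R ρ hR hρ.1 hρ.2.le)]
  have hev : (fun r => deriv volFn r) =ᶠ[nhdsWithin 0 (Set.Ioi 0)]
      (fun r => 2 * ((r^2 * arcsin (sqrt (4*R^2 - r^2)/(2*R)) - Aa R r) / r^3) / π) := by
    filter_upwards [Ioo_mem_nhdsGT_of_mem (Set.mem_Ico.2 ⟨le_refl 0, hR⟩)] with r hr
    obtain ⟨h4, hs2, hsp, hslt⟩ := s_facts hR hr.1 hr.2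
    have hder : deriv volFn r = deriv Fc r := by
      apply Filter.EventuallyEq.deriv_eq
      filter_upwards [isOpen_Ioo.mem_nhds hr] with x hx
      exact heq x hx
    have hFder : HasDerivAt Fc
        ((2*r*arcsin (sqrt (4*R^2 - r^2)/(2*R)) * (π * r^2)
          - Aa R r * (π * (2 * r^1))) / (π * r^2)^2) r := by
      exact (hasDerivAt_Aa hR hr.1 hr.2).div
        (((hasDerivAt_pow 2 r).const_mul π)) (ne_of_gt (mul_pos hπ (pow_pos hr.1 2)))
    rw [hder, hFder.deriv]
    rw [pow_one]
    field_simp [hr.1.ne', hπ.ne']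
  refine Tendsto.congr' hev.symm ?_
  have hG := tendsto_G_div R hR
  have := (hG.const_mul 2).div_const π
  have hlimeq : 2 * (-1/(6*R)) / π = -1 / (3 * π * R) := by
    field_simp
    ring
  rw [← hlimeq]
  exact this
end
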